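/- Let H and G be finitely presented groups and let φ : H → G be a group homomorphism. Then there exist a finitely generated free group F and a group homomorphism Φ from the free product H ∗ F to G such that: the restriction of Φ to the factor H equals φ, Φ is surjective, and the kernel of Φ is the normal closure of a finite subset of H ∗ F. -/

import Mathlib

/-- A group is finitely presented if it is isomorphic to the quotient of a finitely
generated free group by the normal closure of finitely many relations. -/
def IsFinitelyPresented (G : Type) [Group G] : Prop :=
  ∃ (n : ℕ) (rels : Finset (FreeGroup (Fin n))),
    Nonempty (PresentedGroup (↑rels : Set (FreeGroup (Fin n))) ≃* G)

lemma ker_presentedGroup_mk {α : Type*} (rels : Set (FreeGroup α)) :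
    (PresentedGroup.mk rels).ker = Subgroup.normalClosure rels := by
  ext x
  rw [MonoidHom.mem_ker]
  exact QuotientGroup.eq_one_iff x

set_option maxHeartbeats 2000000 in
/-- Any homomorphism `φ : H → G` of finitely presented groups extends to a surjection
`Φ : H ∗ F → G` for some finitely generated free group `F`, whose kernel is the normal
closure of finitely many elements. -/
theorem extend_to_surjection_with_finitely_normally_generated_kernel
    (H G : Type) [Group H] [Group G]
    (hH : IsFinitelyPresented H) (hG : IsFinitelyPresented G) (φ : H →* G) :
    ∃ (m : ℕ) (Φ : Monoid.Coprod H (FreeGroup (Fin m)) →* G),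
      Φ.comp Monoid.Coprod.inl = φ ∧ Function.Surjective Φ ∧
      ∃ S : Finset (Monoid.Coprod H (FreeGroup (Fin m))),
        Φ.ker = Subgroup.normalClosure (↑S : Set (Monoid.Coprod H (FreeGroup (Fin m)))) := by
  classical
  obtain ⟨n, relsH, ⟨eH⟩⟩ := hH
  obtain ⟨m, relsG, ⟨eG⟩⟩ := hG
  -- surjections from the free groups
  set πH : FreeGroup (Fin n) →* H :=
    eH.toMonoidHom.comp (PresentedGroup.mk _) with hπH
  set πG : FreeGroup (Fin m) →* G :=
    eG.toMonoidHom.comp (PresentedGroup.mk _) with hπG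
  have πHsurj : Function.Surjective πH :=
    eH.surjective.comp (PresentedGroup.mk_surjective _)
  have πGsurj : Function.Surjective πG :=
    eG.surjective.comp (PresentedGroup.mk_surjective _)
  have kerπG : πG.ker = Subgroup.normalClosure (↑relsG) := by
    rw [hπG]
    ext x
    simp only [MonoidHom.mem_ker, MonoidHom.comp_apply, MulEquiv.coe_toMonoidHom]
    rw [show (1 : G) = eG 1 by simp, eG.apply_eq_iff_eq, ← MonoidHom.mem_ker,
      ker_presentedGroup_mk]
  -- choose words representing φ of the generators of H
  have hw : ∀ i : Fin n, ∃ w : FreeGroup (Fin m), πG w = φ (πH (FreeGroup.of i)) :=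
    fun i => πGsurj _
  choose w hwspec using hw
  set θ : FreeGroup (Fin n) →* FreeGroup (Fin m) := FreeGroup.lift w with hθ
  set Φ : Monoid.Coprod H (FreeGroup (Fin m)) →* G := Monoid.Coprod.lift φ πG with hΦ
  have hΦinl : Φ.comp Monoid.Coprod.inl = φ := Monoid.Coprod.lift_comp_inl φ πG
  have hΦinr : Φ.comp Monoid.Coprod.inr = πG := Monoid.Coprod.lift_comp_inr φ πG
  have Φsurj : Function.Surjective Φ := by
    intro g
    obtain ⟨x, hx⟩ := πGsurj g
    exact ⟨Monoid.Coprod.inr x, by rw [← hx, ← hΦinr]; rfl⟩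
  refine ⟨m, Φ, hΦinl, Φsurj, ?_⟩
  -- the finite set of relators
  set S : Finset (Monoid.Coprod H (FreeGroup (Fin m))) :=
    relsG.image Monoid.Coprod.inr ∪
      (Finset.univ : Finset (Fin n)).image
        (fun i => Monoid.Coprod.inl (πH (FreeGroup.of i)) * (Monoid.Coprod.inr (w i))⁻¹)
    with hS
  refine ⟨S, le_antisymm ?_ ?_⟩
  · -- hard direction: ker Φ ≤ normalClosure S
    set N := Subgroup.normalClosure (↑S : Set (Monoid.Coprod H (FreeGroup (Fin m)))) with hN
    set π : Monoid.Coprod H (FreeGroup (Fin m)) →* _ := QuotientGroup.mk' N with hπ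
    have hSN : (↑S : Set (Monoid.Coprod H (FreeGroup (Fin m)))) ⊆ N :=
      Subgroup.subset_normalClosure
    -- the relators of G die in the quotient
    have hrelsG : Subgroup.normalClosure (↑relsG) ≤ (π.comp Monoid.Coprod.inr).ker := by
      apply Subgroup.normalClosure_le_normal
      intro r hr
      have : Monoid.Coprod.inr r ∈ N := hSN (by
        simp only [hS, Finset.coe_union, Finset.coe_image, Set.mem_union]
        exact Or.inl ⟨r, hr, rfl⟩)
      simpa [MonoidHom.mem_ker, hπ, QuotientGroup.eq_one_iff] using this
    -- lift to a map ψ : G →* quotient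
    set ψ0 := QuotientGroup.lift (Subgroup.normalClosure ((↑relsG : Set (FreeGroup (Fin m)))))
      (π.comp Monoid.Coprod.inr) hrelsG with hψ0
    set ψ := ψ0.comp eG.symm.toMonoidHom with hψ
    have hψπG : ψ.comp πG = π.comp Monoid.Coprod.inr := by
      rw [hψ, hπG, hψ0]
      ext x
      simp only [MonoidHom.comp_apply, MulEquiv.toMonoidHom_eq_coe,
        MonoidHom.coe_coe]
      change (QuotientGroup.lift _ (π.comp Monoid.Coprod.inr) hrelsG)
        (eG.symm (eG (PresentedGroup.mk _ (FreeGroup.of x)))) = _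
      rw [MulEquiv.symm_apply_apply]
      rfl
    -- φ ∘ πH = πG ∘ θ
    have hsquare : φ.comp πH = πG.comp θ := by
      apply FreeGroup.ext_hom
      intro i
      simp [hθ, hwspec]
    -- π ∘ inl ∘ πH = π ∘ inr ∘ θ
    have hgen : (π.comp Monoid.Coprod.inl).comp πH = (π.comp Monoid.Coprod.inr).comp θ := by
      apply FreeGroup.ext_hom
      intro i
      have : Monoid.Coprod.inl (πH (FreeGroup.of i)) * (Monoid.Coprod.inr (w i))⁻¹ ∈ N :=
        hSN (by
          simp only [hS, Finset.coe_union, Finset.coe_image, Set.mem_union]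
          exact Or.inr ⟨i, by simp, rfl⟩)
      have h1 : π (Monoid.Coprod.inl (πH (FreeGroup.of i))) = π (Monoid.Coprod.inr (w i)) := by
        have h2 : π (Monoid.Coprod.inl (πH (FreeGroup.of i)) * (Monoid.Coprod.inr (w i))⁻¹)
            = 1 := (QuotientGroup.eq_one_iff _).2 this
        rwa [map_mul, map_inv, mul_inv_eq_one] at h2
      simp only [MonoidHom.comp_apply]
      rw [h1, hθ]
      simp
    -- ψ ∘ Φ = π
    have key : ψ.comp Φ = π := by
      apply Monoid.Coprod.hom_ext
      · have : (ψ.comp Φ).comp Monoid.Coprod.inl = ψ.comp φ := by rw [MonoidHom.comp_assoc, hΦinl]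
        rw [this]
        -- suffices to check after composing with the surjection πH
        have : (ψ.comp φ).comp πH = (π.comp Monoid.Coprod.inl).comp πH := by
          rw [MonoidHom.comp_assoc, hsquare, ← MonoidHom.comp_assoc, hψπG, hgen]
        ext h
        obtain ⟨x, rfl⟩ := πHsurj h
        exact DFunLike.congr_fun this x
      · rw [MonoidHom.comp_assoc, hΦinr, hψπG]
    intro x hx
    have : π x = 1 := by
      rw [← key]
      simp only [MonoidHom.comp_apply]
      rw [MonoidHom.mem_ker] at hx
      rw [hx, map_one]
    rwa [hπ, ← MonoidHom.mem_ker, QuotientGroup.ker_mk'] at this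
  · -- easy direction
    apply Subgroup.normalClosure_le_normal
    intro x hx
    simp only [hS, Finset.coe_union, Finset.coe_image, Set.mem_union, Set.mem_image] at hx
    rcases hx with ⟨r, hr, rfl⟩ | ⟨i, -, rfl⟩
    · have : r ∈ πG.ker := by
        rw [kerπG]; exact Subgroup.subset_normalClosure hr
      rw [SetLike.mem_coe, MonoidHom.mem_ker, ← hΦinr] at *
      exact this
    · rw [SetLike.mem_coe, MonoidHom.mem_ker]
      simp only [map_mul, map_inv]
      have h1 : Φ (Monoid.Coprod.inl (πH (FreeGroup.of i))) = φ (πH (FreeGroup.of i)) :=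
        DFunLike.congr_fun hΦinl _
      have h2 : Φ (Monoid.Coprod.inr (w i)) = πG (w i) := DFunLike.congr_fun hΦinr _
      rw [h1, h2, hwspec, mul_inv_cancel]
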